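/- For fixed q ∈ ℂ and α ∈ (0,1], there is a constant C(q,η) > 0 such that for every A in a compact set S ⊂ GL(d,ℝ) with uniform bound η on ‖A‖ and ‖A⁻¹‖, the twisted composition operator K_{q,A} defined by (K_{q,A}f)(x) = e^{q·ln‖Ax‖} f(Ax/‖Ax‖) maps C^α(𝕊^{d-1}) to itself and satisfies ‖K_{q,A}f‖_{C^α} ≤ C(q,η) ‖f‖_{C^α} for all f ∈ C^α(𝕊^{d-1}). -/

import Mathlib

open MeasureTheory
open scoped ENNReal NNReal

/-- The sup-norm over the unit sphere, valued in `ℝ≥0∞`. -/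
noncomputable def supNormSphere {d : ℕ} (f : EuclideanSpace ℝ (Fin d) → ℂ) : ℝ≥0∞ :=
  ⨆ (x : EuclideanSpace ℝ (Fin d)) (_ : ‖x‖ = 1), (‖f x‖₊ : ℝ≥0∞)

/-- The `α`-Hölder seminorm `[f]_α = sup_{x ≠ y} |f x − f y| / ‖x − y‖^α` over the unit
sphere, valued in `ℝ≥0∞`. -/
noncomputable def holderSeminormSphere {d : ℕ} (α : ℝ) (f : EuclideanSpace ℝ (Fin d) → ℂ) :
    ℝ≥0∞ :=
  ⨆ (x : EuclideanSpace ℝ (Fin d)) (y : EuclideanSpace ℝ (Fin d)) (_ : ‖x‖ = 1)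
    (_ : ‖y‖ = 1) (_ : x ≠ y), (‖f x - f y‖₊ : ℝ≥0∞) / edist x y ^ α

/-- The Hölder norm `‖f‖_{C^α} = ‖f‖_∞ + [f]_α` on the unit sphere. -/
noncomputable def holderNormSphere {d : ℕ} (α : ℝ) (f : EuclideanSpace ℝ (Fin d) → ℂ) :
    ℝ≥0∞ :=
  supNormSphere f + holderSeminormSphere α f

/-- The twisted composition operator `(K_{q,A} f)(x) = e^{q ln‖Ax‖} f(Ax/‖Ax‖)`. -/
noncomputable def twistKernel {d : ℕ} (q : ℂ)
    (A : EuclideanSpace ℝ (Fin d) →L[ℝ] EuclideanSpace ℝ (Fin d))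
    (f : EuclideanSpace ℝ (Fin d) → ℂ) : EuclideanSpace ℝ (Fin d) → ℂ :=
  fun x => Complex.exp (q * (Real.log ‖A x‖ : ℂ)) * f (‖A x‖⁻¹ • A x)

lemma exp_lipschitz_halfplane {c : ℝ} {a b : ℂ} (ha : a.re ≤ c) (hb : b.re ≤ c) :
    ‖Complex.exp a - Complex.exp b‖ ≤ Real.exp c * ‖a - b‖ :=
  (convex_halfSpace_re_le c).norm_image_sub_le_of_norm_deriv_le
    (fun x _ => Complex.differentiable_exp x)
    (fun x hx => by
      rw [Complex.deriv_exp, Complex.norm_exp]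
      exact Real.exp_le_exp.2 hx)
    hb ha

lemma abs_log_le_of_mem {η t : ℝ} (hη : 1 ≤ η) (h1 : η⁻¹ ≤ t) (h2 : t ≤ η) :
    |Real.log t| ≤ Real.log η := by
  have hη0 : (0:ℝ) < η := lt_of_lt_of_le one_pos hη
  have ht0 : 0 < t := lt_of_lt_of_le (inv_pos.2 hη0) h1
  rw [abs_le]
  constructor
  · have := Real.log_le_log (inv_pos.2 hη0) h1
    rw [Real.log_inv] at this
    linarith
  · exact Real.log_le_log ht0 h2

lemma log_sub_le_aux {η s t : ℝ} (hη0 : 0 < η) (ht : η⁻¹ ≤ t) (hs0 : 0 < s) (h : t ≤ s) :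
    Real.log s - Real.log t ≤ η * |s - t| := by
  have ht0 : 0 < t := lt_of_lt_of_le (inv_pos.2 hη0) ht
  have h1 : Real.log s - Real.log t = Real.log (s / t) :=
    (Real.log_div hs0.ne' ht0.ne').symm
  have h2 : Real.log (s / t) ≤ s / t - 1 := Real.log_le_sub_one_of_pos (div_pos hs0 ht0)
  have h3 : s / t - 1 = (s - t) / t := by field_simp
  have htinv : t⁻¹ ≤ η := by
    rw [inv_eq_one_div, div_le_iff₀ ht0]
    calc (1:ℝ) = η * η⁻¹ := (mul_inv_cancel₀ hη0.ne').symm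
    _ ≤ η * t := by gcongr
  have h4 : (s - t) / t ≤ η * (s - t) := by
    rw [div_eq_mul_inv, mul_comm]
    exact mul_le_mul_of_nonneg_right htinv (by linarith)
  have h5 : |s - t| = s - t := abs_of_nonneg (by linarith)
  rw [h5]; linarith

lemma log_lipschitz_aux {η s t : ℝ} (hη0 : 0 < η) (hs : η⁻¹ ≤ s) (ht : η⁻¹ ≤ t) :
    |Real.log s - Real.log t| ≤ η * |s - t| := by
  have hs0 : 0 < s := lt_of_lt_of_le (inv_pos.2 hη0) hs
  have ht0 : 0 < t := lt_of_lt_of_le (inv_pos.2 hη0) ht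
  rcases le_total t s with h | h
  · rw [abs_of_nonneg (by linarith [Real.log_le_log ht0 h])]
    exact log_sub_le_aux hη0 ht hs0 h
  · rw [abs_of_nonpos (by linarith [Real.log_le_log hs0 h])]
    have := log_sub_le_aux hη0 hs ht0 h
    rw [abs_sub_comm] at this
    linarith

/-- For fixed `q ∈ ℂ` and `α ∈ (0,1]` there is a constant `C(q,η) > 0` such that for every
`A` in a compact set `S ⊂ GL(d,ℝ)` with uniform bound `η` on `‖A‖` and `‖A⁻¹‖`, the twisted
composition operator `K_{q,A}` maps `C^α(𝕊^{d-1})` to itself with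
`‖K_{q,A} f‖_{C^α} ≤ C(q,η) ‖f‖_{C^α}`. -/
theorem twist_kernel_operator_bounded
    {d : ℕ} (q : ℂ) (α : ℝ) (hα0 : 0 < α) (hα1 : α ≤ 1) (η : ℝ) (hη : 1 ≤ η)
    (S : Set (EuclideanSpace ℝ (Fin d) →L[ℝ] EuclideanSpace ℝ (Fin d)))
    (hS : IsCompact S)
    (hSnorm : ∀ A ∈ S, ‖A‖ ≤ η)
    (hSinv : ∀ A ∈ S, ∀ x : EuclideanSpace ℝ (Fin d), ‖x‖ = 1 → η⁻¹ ≤ ‖A x‖ ∧ ‖A x‖ ≤ η) :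
    ∃ C : ℝ≥0, 0 < C ∧ ∀ A ∈ S, ∀ f : EuclideanSpace ℝ (Fin d) → ℂ,
      holderNormSphere α (twistKernel q A f) ≤ (C : ℝ≥0∞) * holderNormSphere α f := by
  have hη0 : (0:ℝ) < η := lt_of_lt_of_le one_pos hη
  set B : ℝ := Real.exp (|q.re| * Real.log η) with hBdef
  have hB0 : (0:ℝ) < B := Real.exp_pos _
  set Cb : ℝ := 2 * B * (1 + ‖q‖) * η ^ 2 + B with hCbdef
  have hCb0 : (0:ℝ) < Cb := by positivity
  refine ⟨(2 * Cb).toNNReal + 1, lt_of_lt_of_le zero_lt_one le_add_self, ?_⟩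
  intro A hA f
  -- basic pointwise facts
  have hAop : ∀ v : EuclideanSpace ℝ (Fin d), ‖A v‖ ≤ η * ‖v‖ := fun v =>
    (A.le_opNorm v).trans (mul_le_mul_of_nonneg_right (hSnorm A hA) (norm_nonneg v))
  have hax : ∀ x : EuclideanSpace ℝ (Fin d), ‖x‖ = 1 → η⁻¹ ≤ ‖A x‖ ∧ ‖A x‖ ≤ η :=
    fun x hx => hSinv A hA x hx
  have haxpos : ∀ x : EuclideanSpace ℝ (Fin d), ‖x‖ = 1 → (0:ℝ) < ‖A x‖ := fun x hx =>
    lt_of_lt_of_le (inv_pos.2 hη0) (hax x hx).1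
  set u : EuclideanSpace ℝ (Fin d) → EuclideanSpace ℝ (Fin d) :=
    fun z => ‖A z‖⁻¹ • A z with hudef
  set E : EuclideanSpace ℝ (Fin d) → ℂ :=
    fun z => Complex.exp (q * (Real.log ‖A z‖ : ℂ)) with hEdef
  have hK : ∀ z, twistKernel q A f z = E z * f (u z) := fun z => rfl
  have hu1 : ∀ x : EuclideanSpace ℝ (Fin d), ‖x‖ = 1 → ‖u x‖ = 1 := by
    intro x hx
    rw [hudef]
    simp only [norm_smul, norm_inv, norm_norm]
    exact inv_mul_cancel₀ (haxpos x hx).ne'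
  have hre : ∀ x : EuclideanSpace ℝ (Fin d), ‖x‖ = 1 →
      (q * (Real.log ‖A x‖ : ℂ)).re ≤ |q.re| * Real.log η := by
    intro x hx
    have : (q * (Real.log ‖A x‖ : ℂ)).re = q.re * Real.log ‖A x‖ := by
      simp [Complex.mul_re]
    rw [this]
    calc q.re * Real.log ‖A x‖ ≤ |q.re * Real.log ‖A x‖| := le_abs_self _
    _ = |q.re| * |Real.log ‖A x‖| := abs_mul _ _
    _ ≤ |q.re| * Real.log η :=
        mul_le_mul_of_nonneg_left (abs_log_le_of_mem hη (hax x hx).1 (hax x hx).2)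
          (abs_nonneg _)
  have hEb : ∀ x : EuclideanSpace ℝ (Fin d), ‖x‖ = 1 → ‖E x‖ ≤ B := by
    intro x hx
    rw [hEdef]
    simp only [Complex.norm_exp]
    exact Real.exp_le_exp.2 (hre x hx)
  have hEdiff : ∀ x y : EuclideanSpace ℝ (Fin d), ‖x‖ = 1 → ‖y‖ = 1 →
      ‖E x - E y‖ ≤ B * ‖q‖ * η ^ 2 * ‖x - y‖ := by
    intro x y hx hy
    have h1 : ‖E x - E y‖ ≤ B *
        ‖q * (Real.log ‖A x‖ : ℂ) - q * (Real.log ‖A y‖ : ℂ)‖ :=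
      exp_lipschitz_halfplane (hre x hx) (hre y hy)
    have h2 : ‖q * (Real.log ‖A x‖ : ℂ) - q * (Real.log ‖A y‖ : ℂ)‖ =
        ‖q‖ * |Real.log ‖A x‖ - Real.log ‖A y‖| := by
      rw [← mul_sub, ← Complex.ofReal_sub, norm_mul, Complex.norm_real,
        Real.norm_eq_abs]
    have h3 : |Real.log ‖A x‖ - Real.log ‖A y‖| ≤ η * |‖A x‖ - ‖A y‖| :=
      log_lipschitz_aux hη0 (hax x hx).1 (hax y hy).1
    have h4 : |‖A x‖ - ‖A y‖| ≤ ‖A x - A y‖ := abs_norm_sub_norm_le _ _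
    have h5 : ‖A x - A y‖ ≤ η * ‖x - y‖ := by
      rw [← map_sub]; exact hAop (x - y)
    have hq0 : (0:ℝ) ≤ ‖q‖ := norm_nonneg q
    calc ‖E x - E y‖ ≤ B * (‖q‖ * |Real.log ‖A x‖ - Real.log ‖A y‖|) := by
          rw [← h2]; exact h1
    _ ≤ B * (‖q‖ * (η * (η * ‖x - y‖))) := by
          apply mul_le_mul_of_nonneg_left _ hB0.le
          apply mul_le_mul_of_nonneg_left _ hq0
          calc |Real.log ‖A x‖ - Real.log ‖A y‖| ≤ η * |‖A x‖ - ‖A y‖| := h3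
          _ ≤ η * (η * ‖x - y‖) := by
              apply mul_le_mul_of_nonneg_left _ hη0.le
              exact h4.trans h5
    _ = B * ‖q‖ * η ^ 2 * ‖x - y‖ := by ring
  have huLip : ∀ x y : EuclideanSpace ℝ (Fin d), ‖x‖ = 1 → ‖y‖ = 1 →
      ‖u x - u y‖ ≤ 2 * η ^ 2 * ‖x - y‖ := by
    intro x y hx hy
    have hxpos := haxpos x hx
    have hypos := haxpos y hy
    have hxinv : ‖A x‖⁻¹ ≤ η := by
      rw [inv_eq_one_div, div_le_iff₀ hxpos]
      calc (1:ℝ) = η * η⁻¹ := (mul_inv_cancel₀ hη0.ne').symm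
      _ ≤ η * ‖A x‖ := by gcongr; exact (hax x hx).1
    have hid : u x - u y = ‖A x‖⁻¹ • (A x - A y) + (‖A x‖⁻¹ - ‖A y‖⁻¹) • A y := by
      rw [hudef]
      simp only [smul_sub, sub_smul]
      abel
    have h5 : ‖A x - A y‖ ≤ η * ‖x - y‖ := by
      rw [← map_sub]; exact hAop (x - y)
    have hterm1 : ‖‖A x‖⁻¹ • (A x - A y)‖ ≤ η * (η * ‖x - y‖) := by
      rw [norm_smul, norm_inv, norm_norm]
      exact mul_le_mul hxinv h5 (norm_nonneg _) hη0.le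
    have hterm2 : ‖(‖A x‖⁻¹ - ‖A y‖⁻¹) • A y‖ ≤ η * (η * ‖x - y‖) := by
      rw [norm_smul, Real.norm_eq_abs]
      have hax0 : ‖A x‖ ≠ 0 := hxpos.ne'
      have hay0 : ‖A y‖ ≠ 0 := hypos.ne'
      have hinvdiff : ‖A x‖⁻¹ - ‖A y‖⁻¹ = (‖A y‖ - ‖A x‖) / (‖A x‖ * ‖A y‖) := by
        field_simp
      have h6 : |‖A y‖ - ‖A x‖| ≤ η * ‖x - y‖ := by
        rw [abs_sub_comm]; exact (abs_norm_sub_norm_le _ _).trans h5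
      calc |‖A x‖⁻¹ - ‖A y‖⁻¹| * ‖A y‖
          = |‖A y‖ - ‖A x‖| / (‖A x‖ * ‖A y‖) * ‖A y‖ := by
            rw [hinvdiff, abs_div, abs_of_pos (mul_pos hxpos hypos)]
      _ = |‖A y‖ - ‖A x‖| * ‖A x‖⁻¹ := by
            field_simp
      _ ≤ (η * ‖x - y‖) * η := mul_le_mul h6 hxinv (inv_nonneg.2 hxpos.le) (by positivity)
      _ = η * (η * ‖x - y‖) := by ring
    calc ‖u x - u y‖
        = ‖‖A x‖⁻¹ • (A x - A y) + (‖A x‖⁻¹ - ‖A y‖⁻¹) • A y‖ := by rw [hid]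
    _ ≤ ‖‖A x‖⁻¹ • (A x - A y)‖ + ‖(‖A x‖⁻¹ - ‖A y‖⁻¹) • A y‖ := norm_add_le _ _
    _ ≤ η * (η * ‖x - y‖) + η * (η * ‖x - y‖) := add_le_add hterm1 hterm2
    _ = 2 * η ^ 2 * ‖x - y‖ := by ring
  -- ENNReal part
  set N : ℝ≥0∞ := supNormSphere f with hNdef
  set H : ℝ≥0∞ := holderSeminormSphere α f with hHdef
  have hfN : ∀ z : EuclideanSpace ℝ (Fin d), ‖z‖ = 1 → (‖f z‖₊ : ℝ≥0∞) ≤ N := by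
    intro z hz
    rw [hNdef, supNormSphere]
    exact le_iSup_of_le z (le_iSup_of_le hz le_rfl)
  have hsup : supNormSphere (twistKernel q A f) ≤ ENNReal.ofReal B * N := by
    rw [supNormSphere]
    refine iSup_le fun x => iSup_le fun hx => ?_
    have h1 : (‖twistKernel q A f x‖₊ : ℝ≥0∞) ≤ ENNReal.ofReal B * ‖f (u x)‖₊ := by
      rw [← enorm_eq_nnnorm, ← ofReal_norm, ← enorm_eq_nnnorm, ← ofReal_norm,
        ← ENNReal.ofReal_mul hB0.le]
      apply ENNReal.ofReal_le_ofReal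
      rw [hK x, norm_mul]
      exact mul_le_mul_of_nonneg_right (hEb x hx) (norm_nonneg _)
    exact h1.trans (mul_le_mul_right (hfN (u x) (hu1 x hx)) _)
  have hsemi : holderSeminormSphere α (twistKernel q A f) ≤
      ENNReal.ofReal (2 * B * η ^ 2) * H +
        ENNReal.ofReal (2 * B * ‖q‖ * η ^ 2) * N := by
    rw [holderSeminormSphere]
    refine iSup_le fun x => iSup_le fun y => iSup_le fun hx => iSup_le fun hy =>
      iSup_le fun hxy => ?_
    apply ENNReal.div_le_of_le_mul
    set e : ℝ≥0∞ := edist x y with hedef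
    have he0 : e ≠ 0 := (edist_pos.2 hxy).ne'
    have heT : e ≠ ⊤ := edist_ne_top x y
    have he2 : e ≤ 2 := by
      rw [hedef, edist_dist]
      calc ENNReal.ofReal (dist x y) ≤ ENNReal.ofReal 2 := by
            apply ENNReal.ofReal_le_ofReal
            rw [dist_eq_norm]
            calc ‖x - y‖ ≤ ‖x‖ + ‖y‖ := norm_sub_le _ _
            _ = 2 := by rw [hx, hy]; norm_num
      _ = 2 := by norm_num
    have hlin : e ≤ 2 * e ^ α := by
      calc e = e ^ (1:ℝ) := (ENNReal.rpow_one e).symm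
      _ = e ^ ((1 - α) + α) := by ring_nf
      _ = e ^ (1 - α) * e ^ α := ENNReal.rpow_add _ _ he0 heT
      _ ≤ (2:ℝ≥0∞) ^ (1 - α) * e ^ α :=
          mul_le_mul_left (ENNReal.rpow_le_rpow he2 (by linarith)) _
      _ ≤ (2:ℝ≥0∞) ^ (1:ℝ) * e ^ α :=
          mul_le_mul_left (ENNReal.rpow_le_rpow_of_exponent_le one_le_two (by linarith)) _
      _ = 2 * e ^ α := by rw [ENNReal.rpow_one]
    have huedist : edist (u x) (u y) ^ α ≤ ENNReal.ofReal (2 * η ^ 2) * e ^ α := by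
      have h1 : edist (u x) (u y) ≤ ENNReal.ofReal (2 * η ^ 2) * e := by
        rw [hedef, edist_dist, edist_dist, ← ENNReal.ofReal_mul (by positivity)]
        apply ENNReal.ofReal_le_ofReal
        rw [dist_eq_norm, dist_eq_norm]
        exact huLip x y hx hy
      have hM1 : (1:ℝ≥0∞) ≤ ENNReal.ofReal (2 * η ^ 2) := by
        rw [ENNReal.one_le_ofReal]
        nlinarith
      calc edist (u x) (u y) ^ α ≤ (ENNReal.ofReal (2 * η ^ 2) * e) ^ α :=
            ENNReal.rpow_le_rpow h1 hα0.le
      _ = ENNReal.ofReal (2 * η ^ 2) ^ α * e ^ α :=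
            ENNReal.mul_rpow_of_nonneg _ _ hα0.le
      _ ≤ ENNReal.ofReal (2 * η ^ 2) ^ (1:ℝ) * e ^ α :=
            mul_le_mul_left (ENNReal.rpow_le_rpow_of_exponent_le hM1 hα1) _
      _ = ENNReal.ofReal (2 * η ^ 2) * e ^ α := by rw [ENNReal.rpow_one]
    have hfdiff : (‖f (u x) - f (u y)‖₊ : ℝ≥0∞) ≤ H * edist (u x) (u y) ^ α := by
      by_cases huv : u x = u y
      · simp [huv]
      · have hb0 : edist (u x) (u y) ^ α ≠ 0 :=
          (ENNReal.rpow_pos (edist_pos.2 huv) (edist_ne_top _ _)).ne'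
        have hbT : edist (u x) (u y) ^ α ≠ ⊤ :=
          ENNReal.rpow_ne_top_of_nonneg hα0.le (edist_ne_top _ _)
        have hH : (‖f (u x) - f (u y)‖₊ : ℝ≥0∞) / edist (u x) (u y) ^ α ≤ H := by
          rw [hHdef, holderSeminormSphere]
          exact le_iSup_of_le (u x) (le_iSup_of_le (u y) (le_iSup_of_le (hu1 x hx)
            (le_iSup_of_le (hu1 y hy) (le_iSup_of_le huv le_rfl))))
        calc (‖f (u x) - f (u y)‖₊ : ℝ≥0∞)
            = (‖f (u x) - f (u y)‖₊ : ℝ≥0∞) / edist (u x) (u y) ^ α *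
                edist (u x) (u y) ^ α := (ENNReal.div_mul_cancel hb0 hbT).symm
        _ ≤ H * edist (u x) (u y) ^ α := mul_le_mul_left hH _
    have hExB : (‖E x‖₊ : ℝ≥0∞) ≤ ENNReal.ofReal B := by
      rw [← enorm_eq_nnnorm, ← ofReal_norm]
      exact ENNReal.ofReal_le_ofReal (hEb x hx)
    have hEdistE : (‖E x - E y‖₊ : ℝ≥0∞) ≤
        ENNReal.ofReal (B * ‖q‖ * η ^ 2) * e := by
      rw [← enorm_eq_nnnorm, ← ofReal_norm, hedef, edist_dist, dist_eq_norm,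
        ← ENNReal.ofReal_mul (by positivity)]
      exact ENNReal.ofReal_le_ofReal (hEdiff x y hx hy)
    have tri : (‖twistKernel q A f x - twistKernel q A f y‖₊ : ℝ≥0∞) ≤
        (‖E x‖₊ : ℝ≥0∞) * (‖f (u x) - f (u y)‖₊ : ℝ≥0∞) +
          (‖E x - E y‖₊ : ℝ≥0∞) * (‖f (u y)‖₊ : ℝ≥0∞) := by
      have hid : twistKernel q A f x - twistKernel q A f y =
          E x * (f (u x) - f (u y)) + (E x - E y) * f (u y) := by
        rw [hK x, hK y]; ring
      rw [hid]
      calc (‖E x * (f (u x) - f (u y)) + (E x - E y) * f (u y)‖₊ : ℝ≥0∞)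
          ≤ (‖E x * (f (u x) - f (u y))‖₊ : ℝ≥0∞) +
              (‖(E x - E y) * f (u y)‖₊ : ℝ≥0∞) := by
            exact_mod_cast nnnorm_add_le _ _
      _ = (‖E x‖₊ : ℝ≥0∞) * (‖f (u x) - f (u y)‖₊ : ℝ≥0∞) +
            (‖E x - E y‖₊ : ℝ≥0∞) * (‖f (u y)‖₊ : ℝ≥0∞) := by
            rw [nnnorm_mul, nnnorm_mul]
            push_cast
            ring
    calc (‖twistKernel q A f x - twistKernel q A f y‖₊ : ℝ≥0∞)
        ≤ (‖E x‖₊ : ℝ≥0∞) * (‖f (u x) - f (u y)‖₊ : ℝ≥0∞) +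
            (‖E x - E y‖₊ : ℝ≥0∞) * (‖f (u y)‖₊ : ℝ≥0∞) := tri
    _ ≤ ENNReal.ofReal B * (H * (ENNReal.ofReal (2 * η ^ 2) * e ^ α)) +
          (ENNReal.ofReal (B * ‖q‖ * η ^ 2) * (2 * e ^ α)) * N := by
        apply add_le_add
        · exact mul_le_mul' hExB (hfdiff.trans (mul_le_mul_right huedist H))
        · apply mul_le_mul'
          · exact hEdistE.trans (mul_le_mul_right hlin _)
          · exact hfN (u y) (hu1 y hy)
    _ = (ENNReal.ofReal B * ENNReal.ofReal (2 * η ^ 2) * H +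
          (2:ℝ≥0∞) * ENNReal.ofReal (B * ‖q‖ * η ^ 2) * N) * e ^ α := by
        ring
    _ = (ENNReal.ofReal (2 * B * η ^ 2) * H +
          ENNReal.ofReal (2 * B * ‖q‖ * η ^ 2) * N) * e ^ α := by
        rw [← ENNReal.ofReal_mul hB0.le]
        rw [show ((2:ℝ≥0∞)) = ENNReal.ofReal 2 by norm_num,
          ← ENNReal.ofReal_mul (by norm_num)]
        ring_nf
  -- combine
  have hq0 : (0:ℝ) ≤ ‖q‖ := norm_nonneg q
  have haux1 : (0:ℝ) ≤ 2 * B * ‖q‖ * η ^ 2 :=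
    mul_nonneg (mul_nonneg (mul_nonneg (by norm_num) hB0.le) hq0) (sq_nonneg η)
  have haux2 : (0:ℝ) ≤ 2 * B * η ^ 2 :=
    mul_nonneg (mul_nonneg (by norm_num) hB0.le) (sq_nonneg η)
  have hcoef1 : ENNReal.ofReal B ≤ ENNReal.ofReal Cb := by
    apply ENNReal.ofReal_le_ofReal
    rw [hCbdef]
    nlinarith [haux1, haux2]
  have hcoef2 : ENNReal.ofReal (2 * B * η ^ 2) ≤ ENNReal.ofReal Cb := by
    apply ENNReal.ofReal_le_ofReal
    rw [hCbdef]
    nlinarith [haux1, hB0.le]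
  have hcoef3 : ENNReal.ofReal (2 * B * ‖q‖ * η ^ 2) ≤ ENNReal.ofReal Cb := by
    apply ENNReal.ofReal_le_ofReal
    rw [hCbdef]
    nlinarith [haux2, hB0.le]
  have hfinal : holderNormSphere α (twistKernel q A f) ≤
      ENNReal.ofReal (2 * Cb) * holderNormSphere α f := by
    rw [holderNormSphere, holderNormSphere, ← hNdef, ← hHdef]
    calc supNormSphere (twistKernel q A f) + holderSeminormSphere α (twistKernel q A f)
        ≤ ENNReal.ofReal B * N + (ENNReal.ofReal (2 * B * η ^ 2) * H +
            ENNReal.ofReal (2 * B * ‖q‖ * η ^ 2) * N) := add_le_add hsup hsemi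
    _ ≤ ENNReal.ofReal Cb * N + (ENNReal.ofReal Cb * H + ENNReal.ofReal Cb * N) := by
        gcongr
    _ = ENNReal.ofReal Cb * (N + H) + ENNReal.ofReal Cb * N := by
        rw [mul_add]; ring
    _ ≤ ENNReal.ofReal Cb * (N + H) + ENNReal.ofReal Cb * (N + H) := by
        gcongr
        exact le_self_add
    _ = (2:ℝ≥0∞) * ENNReal.ofReal Cb * (N + H) := by ring
    _ = ENNReal.ofReal (2 * Cb) * (N + H) := by
        rw [show ((2:ℝ≥0∞)) = ENNReal.ofReal 2 by norm_num,
          ← ENNReal.ofReal_mul (by norm_num)]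
  refine hfinal.trans (mul_le_mul_left ?_ _)
  rw [ENNReal.ofReal]
  exact_mod_cast le_self_add
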